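/- For every x̄ ∈ K ∩ ℤⁿ, the recession cone of Q(x̄) equals K; that is, for d ∈ ℝⁿ one has (x + t·d ∈ Q(x̄) for every x ∈ Q(x̄) and every t ≥ 0) if and only if d_i ≥ 0 for all i. -/
import Mathlib


/-- Lexicographic strict order on `Fin n → ℝ` associated with the standard basis. -/
def lexLt {n : ℕ} (x y : Fin n → ℝ) : Prop :=
  ∃ i : Fin n, x i < y i ∧ ∀ j : Fin n, j < i → x j = y j

/-- `x ⪯ y` iff `x ≺ y` or `x = y`. -/
def lexLe {n : ℕ} (x y : Fin n → ℝ) : Prop := lexLt x y ∨ x = y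

/-- Membership in the cone `K = ℝⁿ₊`. -/
def inK {n : ℕ} (x : Fin n → ℝ) : Prop := ∀ i, 0 ≤ x i

/-- `x` is an integer point. -/
def isInt {n : ℕ} (x : Fin n → ℝ) : Prop := ∀ i, ∃ z : ℤ, x i = (z : ℝ)

/-- `Q(x̄) = conv {x ∈ K ∩ ℤⁿ : x ⪰ x̄}`. -/
def Q {n : ℕ} (xb : Fin n → ℝ) : Set (Fin n → ℝ) :=
  convexHull ℝ {x | inK x ∧ isInt x ∧ lexLe xb x}

/-- For `x̄ ∈ K ∩ ℤⁿ`, the recession cone of `Q(x̄)` equals `K`: a direction `d`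
satisfies `x + t•d ∈ Q(x̄)` for all `x ∈ Q(x̄)` and all `t ≥ 0` iff `d ≥ 0`. -/
lemma lexLe_trans {n : ℕ} {x y z : Fin n → ℝ} (h1 : lexLe x y) (h2 : lexLe y z) :
    lexLe x z := by
  rcases h1 with h1 | rfl
  · rcases h2 with h2 | rfl
    · obtain ⟨i, hi, hj⟩ := h1
      obtain ⟨k, hk, hl⟩ := h2
      rcases lt_trichotomy i k with h | rfl | h
      · exact Or.inl ⟨i, by rw [← hl i h]; exact hi,
          fun j hj' => (hj j hj').trans (hl j (hj'.trans h))⟩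
      · exact Or.inl ⟨i, hi.trans hk, fun j hj' => (hj j hj').trans (hl j hj')⟩
      · exact Or.inl ⟨k, ((hj k h).symm ▸ hk), fun j hj' => (hj j (hj'.trans h)).trans (hl j hj')⟩
    · exact Or.inl h1
  · exact h2

lemma lexLe_add_of_inK {n : ℕ} (v w : Fin n → ℝ) (hw : inK w) : lexLe v (v + w) := by
  by_cases h : v + w = v
  · exact Or.inr h.symm
  · have hne : ∃ i, w i ≠ 0 := by
      by_contra hc
      push_neg at hc
      exact h (funext fun i => by simp [hc i])
    classical
    set F := Finset.univ.filter (fun i => w i ≠ 0) with hF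
    have hFne : F.Nonempty := ⟨hne.choose, by simp [hF, hne.choose_spec]⟩
    set i := F.min' hFne with hi
    have hiw : w i ≠ 0 := by have := F.min'_mem hFne; simpa [hF] using this
    refine Or.inl ⟨i, ?_, fun j hj => ?_⟩
    · have : 0 < w i := lt_of_le_of_ne (hw i) (Ne.symm hiw)
      simp [this]
    · have : w j = 0 := by
        by_contra hc
        have : i ≤ j := F.min'_le j (by simp [hF, hc])
        exact absurd hj (not_lt.mpr this)
      simp [this]

lemma inK_mem_hull {n : ℕ} (w : Fin n → ℝ) (hw : inK w) :
    w ∈ convexHull ℝ {z : Fin n → ℝ | inK z ∧ isInt z} := by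
  classical
  set t : Fin n → Set ℝ := fun i => {(⌊w i⌋ : ℝ), (⌊w i⌋ : ℝ) + 1} with ht
  have hmem : w ∈ convexHull ℝ (Set.univ.pi t) := by
    refine mem_convexHull_pi fun i _ => ?_
    rw [ht]
    simp only [convexHull_pair, segment_eq_Icc (by linarith : (⌊w i⌋ : ℝ) ≤ (⌊w i⌋ : ℝ) + 1)]
    exact ⟨Int.floor_le _, by have := Int.lt_floor_add_one (w i); linarith⟩
  refine convexHull_mono ?_ hmem
  intro z hz
  constructor
  · intro i
    have := hz i (Set.mem_univ i)
    have h0 : (0 : ℝ) ≤ (⌊w i⌋ : ℝ) := by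
      have : (0:ℤ) ≤ ⌊w i⌋ := Int.le_floor.mpr (by simpa using hw i)
      exact_mod_cast this
    rcases this with h | h <;> rw [h] <;> linarith
  · intro i
    rcases hz i (Set.mem_univ i) with h | h
    · exact ⟨⌊w i⌋, h⟩
    · simp only [Set.mem_singleton_iff] at h
      exact ⟨⌊w i⌋ + 1, by push_cast; linarith⟩

theorem stmt2 {n : ℕ} (xb : Fin n → ℝ) (hK : inK xb) (hI : isInt xb) (d : Fin n → ℝ) :
    (∀ x ∈ Q xb, ∀ t : ℝ, 0 ≤ t → x + t • d ∈ Q xb) ↔ ∀ i, 0 ≤ d i := by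
  set S := {x : Fin n → ℝ | inK x ∧ isInt x ∧ lexLe xb x} with hS
  have hxbS : xb ∈ S := ⟨hK, hI, Or.inr rfl⟩
  constructor
  · intro h i
    by_contra hd
    push_neg at hd
    set t : ℝ := (xb i + 1) / (-d i) with htdef
    have ht : 0 ≤ t := div_nonneg (by linarith [hK i]) (by linarith)
    have hmem := h xb (subset_convexHull ℝ S hxbS) t ht
    have hQK : Q xb ⊆ {x : Fin n → ℝ | inK x} := by
      apply convexHull_min
      · intro x hx; exact hx.1
      · intro x hx y hy a b ha hb hab i
        exact add_nonneg (mul_nonneg ha (hx i)) (mul_nonneg hb (hy i))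
    have := hQK hmem i
    simp only [Pi.add_apply, Pi.smul_apply, smul_eq_mul] at this
    have htd : t * d i = -(xb i + 1) := by
      rw [htdef, div_mul_eq_mul_div, div_eq_iff (by linarith : -d i ≠ 0)]; ring
    rw [htd] at this
    linarith
  · intro hd x hx t ht
    -- translation map
    have key : ∀ v ∈ S, v + t • d ∈ Q xb := by
      intro v hv
      have hw : inK (t • d) := fun i => by
        simpa using mul_nonneg ht (hd i)
      have h1 : (t • d) ∈ convexHull ℝ {z : Fin n → ℝ | inK z ∧ isInt z} :=
        inK_mem_hull _ hw
      have h2 : v + t • d ∈ (fun z => v + z) '' convexHull ℝ {z : Fin n → ℝ | inK z ∧ isInt z} :=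
        ⟨t • d, h1, rfl⟩
      have h3 : (fun z => v + z) '' convexHull ℝ {z : Fin n → ℝ | inK z ∧ isInt z}
          = convexHull ℝ ((fun z => v + z) '' {z : Fin n → ℝ | inK z ∧ isInt z}) := by
        exact (AffineEquiv.constVAdd ℝ (Fin n → ℝ) v).toAffineMap.image_convexHull _
      rw [h3] at h2
      refine convexHull_mono ?_ h2
      rintro y ⟨z, ⟨hzK, hzI⟩, rfl⟩
      refine ⟨fun i => add_nonneg (hv.1 i) (hzK i), fun i => ?_, ?_⟩
      · obtain ⟨a, ha⟩ := hv.2.1 i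
        obtain ⟨b, hb⟩ := hzI i
        exact ⟨a + b, by push_cast; simp [ha, hb]⟩
      · exact lexLe_trans hv.2.2 (lexLe_add_of_inK v z hzK)
    have h3 := (AffineEquiv.constVAdd ℝ (Fin n → ℝ) (t • d)).toAffineMap.image_convexHull S
    have hfx : x + t • d ∈
        (AffineEquiv.constVAdd ℝ (Fin n → ℝ) (t • d)).toAffineMap '' (convexHull ℝ S) :=
      ⟨x, hx, by simp [add_comm]⟩
    rw [h3] at hfx
    have hsub : (AffineEquiv.constVAdd ℝ (Fin n → ℝ) (t • d)).toAffineMap '' S ⊆ Q xb := by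
      rintro y ⟨v, hv, rfl⟩
      have := key v hv
      simpa [add_comm] using this
    exact convexHull_min hsub (convex_convexHull ℝ S) hfx
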